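/- Let 0 < λ < 1 and let E_λ be the conditional expectation on the C*-algebra M₂(ℂ) of complex 2×2 matrices defined by E_λ(a) = (λ·a₁₁ + (1 − λ)·a₂₂)·1₂, where a_{ij} are the entries of a and 1₂ is the identity matrix. Then for a real number K ≥ 1, the map K·E_λ − id is positive (i.e. K·E_λ(a) − a is positive semidefinite for every positive semidefinite a) if and only if K ≥ max{λ⁻¹, (1 − λ)⁻¹}. -/

import Mathlib

open scoped ComplexOrder
open Matrix

/-- The conditional expectation `E_λ` on the C*-algebra of 2×2 complex matrices,
`E_λ(a) = (λ·a₁₁ + (1 − λ)·a₂₂)·1₂`. -/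
noncomputable def Elam (l : ℝ) (a : Matrix (Fin 2) (Fin 2) ℂ) : Matrix (Fin 2) (Fin 2) ℂ :=
  ((l : ℂ) * a 0 0 + (1 - (l : ℂ)) * a 1 1) • (1 : Matrix (Fin 2) (Fin 2) ℂ)

lemma psd_diag_nonneg {n : Type*} [Fintype n] [DecidableEq n]
    {M : Matrix n n ℂ} (h : M.PosSemidef) (i : n) : 0 ≤ M i i := by
  have h2 := h.dotProduct_mulVec_nonneg (Pi.single i 1)
  rw [Matrix.mulVec_single] at h2
  have hs : star (Pi.single i (1:ℂ)) = (Pi.single i 1 : n → ℂ) := by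
    funext j; by_cases hj : j = i <;> simp [Pi.single_apply, hj]
  rw [hs, single_dotProduct] at h2
  simpa using h2

lemma smul_one_psd (c : ℂ) (hc : 0 ≤ c) :
    (c • (1 : Matrix (Fin 2) (Fin 2) ℂ)).PosSemidef := by
  have : c • (1 : Matrix (Fin 2) (Fin 2) ℂ) = Matrix.diagonal (fun _ => c) := by
    ext i j
    by_cases hij : i = j <;>
      simp [Matrix.one_apply, Matrix.diagonal_apply, hij]
  rw [this]
  exact Matrix.posSemidef_diagonal_iff.mpr fun _ => hc

theorem Elam_positive_iff (l : ℝ) (h0 : 0 < l) (h1 : l < 1) (K : ℝ) (hK : 1 ≤ K) :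
    (∀ a : Matrix (Fin 2) (Fin 2) ℂ, a.PosSemidef → (K • Elam l a - a).PosSemidef) ↔
      max l⁻¹ (1 - l)⁻¹ ≤ K := by
  constructor
  · intro H
    have key : ∀ (x y : ℝ), 0 ≤ x → 0 ≤ y →
        0 ≤ K * (l * x + (1 - l) * y) - x := by
      intro x y hx hy
      have hpsd : (Matrix.diagonal ![(x:ℂ), (y:ℂ)]).PosSemidef := by
        refine Matrix.posSemidef_diagonal_iff.mpr fun i => ?_
        fin_cases i <;> simpa using by positivity
      have := psd_diag_nonneg (H _ hpsd) 0
      have hentry : (K • Elam l (Matrix.diagonal ![(x:ℂ), (y:ℂ)])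
          - Matrix.diagonal ![(x:ℂ), (y:ℂ)]) 0 0
          = ((K * (l * x + (1 - l) * y) - x : ℝ) : ℂ) := by
        simp [Elam, Matrix.smul_apply, Matrix.one_apply]
        push_cast
        ring
      rw [hentry] at this
      exact_mod_cast this
    have key2 : ∀ (x y : ℝ), 0 ≤ x → 0 ≤ y →
        0 ≤ K * (l * x + (1 - l) * y) - y := by
      intro x y hx hy
      have hpsd : (Matrix.diagonal ![(x:ℂ), (y:ℂ)]).PosSemidef := by
        refine Matrix.posSemidef_diagonal_iff.mpr fun i => ?_
        fin_cases i <;> simpa using by positivity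
      have := psd_diag_nonneg (H _ hpsd) 1
      have hentry : (K • Elam l (Matrix.diagonal ![(x:ℂ), (y:ℂ)])
          - Matrix.diagonal ![(x:ℂ), (y:ℂ)]) 1 1
          = ((K * (l * x + (1 - l) * y) - y : ℝ) : ℂ) := by
        simp [Elam, Matrix.smul_apply, Matrix.one_apply]
        push_cast
        ring
      rw [hentry] at this
      exact_mod_cast this
    refine max_le ?_ ?_
    · have := key 1 0 zero_le_one le_rfl
      rw [inv_eq_one_div, div_le_iff₀ h0]; nlinarith
    · have := key2 0 1 le_rfl zero_le_one
      rw [inv_eq_one_div, div_le_iff₀ (by linarith : (0:ℝ) < 1 - l)]; nlinarith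
  · intro hmax a ha
    have hKl : 1 ≤ K * l := by
      have hinv : l⁻¹ ≤ K := le_trans (le_max_left _ _) hmax
      have := mul_le_mul_of_nonneg_left hinv h0.le
      rw [mul_inv_cancel₀ h0.ne'] at this
      nlinarith
    have hKl' : 1 ≤ K * (1 - l) := by
      have h0' : (0:ℝ) < 1 - l := by linarith
      have hinv : (1 - l)⁻¹ ≤ K := le_trans (le_max_right _ _) hmax
      have := mul_le_mul_of_nonneg_left hinv h0'.le
      rw [mul_inv_cancel₀ h0'.ne'] at this
      nlinarith
    set U : Matrix (Fin 2) (Fin 2) ℂ := !![0, 1; -1, 0] with hU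
    have hdecomp : K • Elam l a - a =
        (((K * l - 1 : ℝ) : ℂ) * a 0 0) • (1 : Matrix (Fin 2) (Fin 2) ℂ)
        + (((K * (1 - l) - 1 : ℝ) : ℂ) * a 1 1) • (1 : Matrix (Fin 2) (Fin 2) ℂ)
        + U * aᵀ * Uᴴ := by
      ext i j
      fin_cases i <;> fin_cases j <;>
        simp [Elam, hU, Matrix.mul_apply, Fin.sum_univ_two, Matrix.one_apply, Matrix.conjTranspose_apply, Matrix.vecMul, dotProduct] <;>
        push_cast <;> ring
    rw [hdecomp]
    refine Matrix.PosSemidef.add (Matrix.PosSemidef.add ?_ ?_) ?_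
    · exact smul_one_psd _ (mul_nonneg (by exact_mod_cast (by linarith : (0:ℝ) ≤ K*l - 1))
        (psd_diag_nonneg ha 0))
    · exact smul_one_psd _ (mul_nonneg (by exact_mod_cast (by linarith : (0:ℝ) ≤ K*(1-l) - 1))
        (psd_diag_nonneg ha 1))
    · exact ha.transpose.mul_mul_conjTranspose_same U
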